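/- Let L ∈ ℝ^{M×M} (M ≥ 2) be symmetric with nonpositive off-diagonal entries, satisfying L·𝟏 = 0, and irreducible. Let E_1, …, E_M ∈ ℝ^{n×n} with E_1 Hurwitz, set K_1 = 0 and K_i = γ I_n for i ∈ {2,…,M}, let Ẽ := blockdiag(E_2, …, E_M) ∈ ℝ^{(M−1)n×(M−1)n}, let L̃ ∈ ℝ^{(M−1)×(M−1)} be obtained from L by deleting its first row and first column, and let μ > 0 be such that vᵀ L̃ v ≥ μ‖v‖² for all v. If γ > ‖Ẽ + Ẽᵀ‖ / (2μ) (operator norm), then the Mn×Mn matrix blockdiag(E_1, …, E_M) − blockdiag(K_1, …, K_M)·(L ⊗ I_n) is Hurwitz, where ⊗ denotes the Kronecker product. -/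

import Mathlib

open Matrix Kronecker

/-- A matrix is irreducible if for every nonempty proper subset `S` of the index set
there exist `i ∈ S` and `j ∉ S` with `L i j ≠ 0`. -/
def MatIrreducible {M : ℕ} (L : Matrix (Fin M) (Fin M) ℝ) : Prop :=
  ∀ S : Finset (Fin M), S.Nonempty → S ≠ Finset.univ →
    ∃ i ∈ S, ∃ j, j ∉ S ∧ L i j ≠ 0

/-- The operator norm of a real matrix, induced by the Euclidean norms. -/
noncomputable def opNorm {α β : Type*} [Fintype α] [Fintype β] [DecidableEq β]
    (M : Matrix α β ℝ) : ℝ :=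
  ‖(Matrix.toEuclideanLin M).toContinuousLinearMap‖

/-- The Euclidean norm of a real vector. -/
noncomputable def eucNorm {α : Type*} [Fintype α] (v : α → ℝ) : ℝ :=
  ‖(WithLp.equiv 2 (α → ℝ)).symm v‖

/-- A real square matrix is Hurwitz if every eigenvalue of its complexification has
negative real part. -/
def IsHurwitz {n : Type*} [Fintype n] [DecidableEq n] (A : Matrix n n ℝ) : Prop :=
  ∀ z ∈ spectrum ℂ (A.map Complex.ofReal), z.re < 0

/-- Block diagonal matrix with square blocks `E 0, …, E (k-1)`. -/
def bdiag {k n : ℕ} (E : Fin k → Matrix (Fin n) (Fin n) ℝ) :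
    Matrix (Fin k × Fin n) (Fin k × Fin n) ℝ :=
  fun p q => if p.1 = q.1 then E p.1 p.2 q.2 else 0

lemma mem_spectrum_iff_exists_eigvec {m : Type*} [Fintype m] [DecidableEq m]
    (A : Matrix m m ℂ) (z : ℂ) :
    z ∈ spectrum ℂ A ↔ ∃ v : m → ℂ, v ≠ 0 ∧ A *ᵥ v = z • v := by
  have key : ∀ v : m → ℂ, (algebraMap ℂ (Matrix m m ℂ) z - A) *ᵥ v = z • v - A *ᵥ v := by
    intro v
    rw [Matrix.sub_mulVec, Algebra.algebraMap_eq_smul_one, Matrix.smul_mulVec,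
      Matrix.one_mulVec]
  rw [spectrum.mem_iff, Matrix.isUnit_iff_isUnit_det, isUnit_iff_ne_zero, not_ne_iff,
    ← Matrix.exists_mulVec_eq_zero_iff]
  constructor
  · rintro ⟨v, hv, h⟩
    exact ⟨v, hv, by rw [key, sub_eq_zero] at h; exact h.symm⟩
  · rintro ⟨v, hv, h⟩
    exact ⟨v, hv, by rw [key, h, sub_self]⟩

lemma enorm_sq {α : Type*} [Fintype α] (u : α → ℝ) : eucNorm u ^ 2 = ∑ i, u i ^ 2 := by
  rw [eucNorm, EuclideanSpace.norm_eq, Real.sq_sqrt (Finset.sum_nonneg fun i _ => sq_nonneg _)]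
  simp [sq_abs]

lemma mulVec_enorm_le {α : Type*} [Fintype α] [DecidableEq α] (B : Matrix α α ℝ) (u : α → ℝ) :
    eucNorm (B *ᵥ u) ≤ opNorm B * eucNorm u := by
  have h := (Matrix.toEuclideanLin B).toContinuousLinearMap.le_opNorm
    ((WithLp.equiv 2 (α → ℝ)).symm u)
  have e : (Matrix.toEuclideanLin B).toContinuousLinearMap ((WithLp.equiv 2 (α → ℝ)).symm u)
      = (WithLp.equiv 2 (α → ℝ)).symm (B *ᵥ u) := rfl
  rw [e] at h
  exact h

lemma dot_le_opNorm {α : Type*} [Fintype α] [DecidableEq α] (B : Matrix α α ℝ) (u : α → ℝ) :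
    u ⬝ᵥ (B *ᵥ u) ≤ opNorm B * eucNorm u ^ 2 := by
  have h1 : u ⬝ᵥ (B *ᵥ u) =
      inner ℝ ((WithLp.equiv 2 (α → ℝ)).symm u) ((WithLp.equiv 2 (α → ℝ)).symm (B *ᵥ u)) := by
    simp [PiLp.inner_apply, dotProduct, RCLike.inner_apply, WithLp.equiv_symm_apply, PiLp.toLp_apply, mul_comm]
  calc u ⬝ᵥ (B *ᵥ u)
      ≤ ‖(WithLp.equiv 2 (α → ℝ)).symm u‖ * ‖(WithLp.equiv 2 (α → ℝ)).symm (B *ᵥ u)‖ := by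
        rw [h1]; exact real_inner_le_norm _ _
    _ = eucNorm u * eucNorm (B *ᵥ u) := rfl
    _ ≤ eucNorm u * (opNorm B * eucNorm u) :=
        mul_le_mul_of_nonneg_left (mulVec_enorm_le B u) (norm_nonneg _)
    _ = opNorm B * eucNorm u ^ 2 := by ring

/-- Stability of the distributed observer error matrix
`blockdiag(E_i) − blockdiag(K_i)(L ⊗ I)` with `K_1 = 0`, `K_i = γI` (`i ≥ 2`),
for `γ > ‖Ẽ + Ẽᵀ‖/(2μ)`. (Nodes are indexed by `Fin (M+2)`, node 1 being index `0`.) -/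
theorem stmt4 {M n : ℕ} (L : Matrix (Fin (M + 2)) (Fin (M + 2)) ℝ)
    (hsym : L.IsSymm)
    (hoff : ∀ i j, i ≠ j → L i j ≤ 0)
    (hone : L *ᵥ (fun _ => (1 : ℝ)) = 0)
    (hirr : MatIrreducible L)
    (E : Fin (M + 2) → Matrix (Fin n) (Fin n) ℝ)
    (hE1 : IsHurwitz (E 0))
    (γ μ : ℝ) (hμ : 0 < μ)
    (hLtilde : ∀ v : Fin (M + 1) → ℝ,
      μ * eucNorm v ^ 2 ≤ v ⬝ᵥ ((L.submatrix Fin.succ Fin.succ) *ᵥ v))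
    (hγ : opNorm (bdiag (fun i : Fin (M + 1) => E i.succ) +
      (bdiag (fun i : Fin (M + 1) => E i.succ))ᵀ) / (2 * μ) < γ) :
    IsHurwitz (bdiag E -
      bdiag (fun i => if i = 0 then (0 : Matrix (Fin n) (Fin n) ℝ) else γ • 1) *
        (L ⊗ₖ (1 : Matrix (Fin n) (Fin n) ℝ))) := by
  intro z hz
  set A : Matrix (Fin (M + 2) × Fin n) (Fin (M + 2) × Fin n) ℝ :=
    bdiag E - bdiag (fun i => if i = 0 then (0 : Matrix (Fin n) (Fin n) ℝ) else γ • 1) *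
      (L ⊗ₖ (1 : Matrix (Fin n) (Fin n) ℝ)) with hAdef
  have hA : ∀ (p q : Fin (M + 2) × Fin n), A p q =
      (if p.1 = q.1 then E p.1 p.2 q.2 else 0) -
        (if p.1 = 0 then 0 else if p.2 = q.2 then γ * L p.1 q.1 else 0) := by
    rintro ⟨p1, p2⟩ ⟨q1, q2⟩
    simp only [hAdef, Matrix.sub_apply, Matrix.mul_apply, bdiag, Matrix.kroneckerMap_apply,
      Matrix.one_apply, Fintype.sum_prod_type, ite_mul, zero_mul, mul_ite, mul_one, mul_zero,
      Finset.sum_ite_eq, Finset.sum_ite_eq', Finset.mem_univ, if_true]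
    congr 1
    split_ifs <;> simp_all [Matrix.smul_apply, Matrix.one_apply]
  obtain ⟨v, hvne, hv⟩ := (mem_spectrum_iff_exists_eigvec _ z).mp hz
  have heig : ∀ p : Fin (M + 2) × Fin n,
      (∑ q, ((A p q : ℝ) : ℂ) * v q) = z * v p := by
    intro p
    simpa [Matrix.mulVec, dotProduct, Matrix.map_apply] using congrFun hv p
  by_cases h0 : (fun k => v (0, k)) = 0
  · -- main case: spectrum of the reduced matrix
    set w : Fin (M + 1) × Fin n → ℂ := fun p => v (p.1.succ, p.2) with hwdef
    have hwne : w ≠ 0 := by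
      intro hcon
      apply hvne
      funext p
      obtain ⟨p1, p2⟩ := p
      induction p1 using Fin.cases with
      | zero => exact congrFun h0 p2
      | succ i => exact congrFun hcon (i, p2)
    set Lt : Matrix (Fin (M + 1)) (Fin (M + 1)) ℝ := L.submatrix Fin.succ Fin.succ with hLtdef
    set At : Matrix (Fin (M + 1) × Fin n) (Fin (M + 1) × Fin n) ℝ :=
      bdiag (fun i : Fin (M + 1) => E i.succ) -
        γ • (Lt ⊗ₖ (1 : Matrix (Fin n) (Fin n) ℝ)) with hAtdef
    have hAt : ∀ (p q : Fin (M + 1) × Fin n), At p q =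
        (if p.1 = q.1 then E p.1.succ p.2 q.2 else 0) -
          (if p.2 = q.2 then γ * L p.1.succ q.1.succ else 0) := by
      rintro ⟨p1, p2⟩ ⟨q1, q2⟩
      simp only [hAtdef, Matrix.sub_apply, Matrix.smul_apply, bdiag,
        Matrix.kroneckerMap_apply, Matrix.one_apply, hLtdef, Matrix.submatrix_apply,
        smul_eq_mul, mul_ite, mul_one, mul_zero]
    have heigw : ∀ p : Fin (M + 1) × Fin n,
        (∑ q, ((At p q : ℝ) : ℂ) * w q) = z * w p := by
      rintro ⟨i, j⟩
      have h := heig (i.succ, j)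
      simp only [hA, Fin.succ_ne_zero, if_neg, if_false] at h
      have hv0j : v (0, j) = 0 := congrFun h0 j
      simp only [hAt]
      simp only [Complex.ofReal_sub, apply_ite Complex.ofReal, Complex.ofReal_zero,
        Complex.ofReal_mul, sub_mul, ite_mul, zero_mul, Finset.sum_sub_distrib,
        Fintype.sum_prod_type, Finset.sum_ite_irrel, Finset.sum_const_zero,
        Finset.sum_ite_eq, Finset.sum_ite_eq', Finset.mem_univ,
        if_true] at h ⊢
      rw [Fin.sum_univ_succ] at h
      simp only [hv0j, mul_zero, zero_add] at h
      exact h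
    set a : Fin (M + 1) × Fin n → ℝ := fun p => (w p).re with hadef
    set b : Fin (M + 1) × Fin n → ℝ := fun p => (w p).im with hbdef
    set S : ℝ := ∑ p, Complex.normSq (w p) with hSdef
    have hSpos : 0 < S := by
      obtain ⟨p, hp⟩ := Function.ne_iff.mp hwne
      exact Finset.sum_pos' (fun q _ => Complex.normSq_nonneg _)
        ⟨p, Finset.mem_univ p, Complex.normSq_pos.mpr hp⟩
    have hre : z.re * S = a ⬝ᵥ (At *ᵥ a) + b ⬝ᵥ (At *ᵥ b) := by
      have h1 : ∀ p : Fin (M + 1) × Fin n,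
          ((starRingEnd ℂ) (w p) * (z * w p)).re = z.re * Complex.normSq (w p) := by
        intro p
        simp only [Complex.mul_re, Complex.mul_im, Complex.conj_re, Complex.conj_im,
          Complex.normSq_apply]
        ring
      have h2 : z.re * S =
          ∑ p, ((starRingEnd ℂ) (w p) * (∑ q, ((At p q : ℝ) : ℂ) * w q)).re := by
        simp only [heigw, h1, hSdef, Finset.mul_sum]
      rw [h2]
      have h3 : ∀ p q : Fin (M + 1) × Fin n,
          ((starRingEnd ℂ) (w p) * (((At p q : ℝ) : ℂ) * w q)).re
            = At p q * (a p * a q) + At p q * (b p * b q) := by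
        intro p q
        simp only [Complex.mul_re, Complex.mul_im, Complex.conj_re, Complex.conj_im,
          Complex.ofReal_re, Complex.ofReal_im, hadef, hbdef]
        ring
      have h4 : ∀ p : Fin (M + 1) × Fin n,
          ((starRingEnd ℂ) (w p) * (∑ q, ((At p q : ℝ) : ℂ) * w q)).re
            = ∑ q, (At p q * (a p * a q) + At p q * (b p * b q)) := by
        intro p
        rw [Finset.mul_sum, Complex.re_sum]
        exact Finset.sum_congr rfl fun q _ => h3 p q
      simp only [h4, Finset.sum_add_distrib]
      simp only [dotProduct, Matrix.mulVec, Finset.mul_sum]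
      congr 1 <;>
        exact Finset.sum_congr rfl fun p _ => Finset.sum_congr rfl fun q _ => by ring
    set B : Matrix (Fin (M + 1) × Fin n) (Fin (M + 1) × Fin n) ℝ :=
      bdiag (fun i : Fin (M + 1) => E i.succ) +
        (bdiag (fun i : Fin (M + 1) => E i.succ))ᵀ with hBdef
    have hγpos : 0 < γ :=
      lt_of_le_of_lt (div_nonneg (norm_nonneg _) (by linarith)) hγ
    have hLtb : ∀ u : Fin (M + 1) × Fin n → ℝ,
        μ * eucNorm u ^ 2 ≤ u ⬝ᵥ ((Lt ⊗ₖ (1 : Matrix (Fin n) (Fin n) ℝ)) *ᵥ u) := by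
      intro u
      have hcol : u ⬝ᵥ ((Lt ⊗ₖ (1 : Matrix (Fin n) (Fin n) ℝ)) *ᵥ u)
          = ∑ j : Fin n, (fun i => u (i, j)) ⬝ᵥ (Lt *ᵥ (fun i => u (i, j))) := by
        simp only [dotProduct, Matrix.mulVec, Matrix.kroneckerMap_apply, Matrix.one_apply,
          Fintype.sum_prod_type, mul_ite, ite_mul, mul_zero, zero_mul, mul_one,
          Finset.sum_ite_irrel, Finset.sum_const_zero, Finset.sum_ite_eq,
          Finset.sum_ite_eq', Finset.mem_univ, if_true, Finset.mul_sum]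
        rw [Finset.sum_comm]
      have hsq : eucNorm u ^ 2 = ∑ j : Fin n, eucNorm (fun i => u (i, j)) ^ 2 := by
        simp only [enorm_sq, Fintype.sum_prod_type]
        rw [Finset.sum_comm]
      calc μ * eucNorm u ^ 2 = ∑ j : Fin n, μ * eucNorm (fun i => u (i, j)) ^ 2 := by
            rw [hsq, Finset.mul_sum]
        _ ≤ ∑ j : Fin n, (fun i => u (i, j)) ⬝ᵥ (Lt *ᵥ (fun i => u (i, j))) :=
            Finset.sum_le_sum fun j _ => hLtilde _
        _ = _ := hcol.symm
    have hquad : ∀ u : Fin (M + 1) × Fin n → ℝ,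
        u ⬝ᵥ (At *ᵥ u) ≤ (opNorm B / 2 - γ * μ) * eucNorm u ^ 2 := by
      intro u
      have hEsym : u ⬝ᵥ ((bdiag (fun i : Fin (M + 1) => E i.succ))ᵀ *ᵥ u)
          = u ⬝ᵥ ((bdiag (fun i : Fin (M + 1) => E i.succ)) *ᵥ u) := by
        rw [Matrix.dotProduct_mulVec, Matrix.vecMul_transpose, dotProduct_comm]
      have hB2 : u ⬝ᵥ (B *ᵥ u)
          = 2 * (u ⬝ᵥ ((bdiag (fun i : Fin (M + 1) => E i.succ)) *ᵥ u)) := by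
        rw [hBdef, Matrix.add_mulVec, dotProduct_add, hEsym]; ring
      have hsplit : u ⬝ᵥ (At *ᵥ u)
          = u ⬝ᵥ ((bdiag (fun i : Fin (M + 1) => E i.succ)) *ᵥ u)
            - γ * (u ⬝ᵥ ((Lt ⊗ₖ (1 : Matrix (Fin n) (Fin n) ℝ)) *ᵥ u)) := by
        rw [hAtdef, Matrix.sub_mulVec, dotProduct_sub, Matrix.smul_mulVec,
          dotProduct_smul, smul_eq_mul]
      have h5 := dot_le_opNorm B u
      have h6 := hLtb u
      rw [hsplit]
      rw [hB2] at h5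
      nlinarith [hγpos.le]
    have hab : eucNorm a ^ 2 + eucNorm b ^ 2 = S := by
      rw [hSdef, enorm_sq, enorm_sq, ← Finset.sum_add_distrib]
      exact Finset.sum_congr rfl fun p _ => by
        simp [Complex.normSq_apply, hadef, hbdef]; ring
    have hc : opNorm B / 2 - γ * μ < 0 := by
      have := (div_lt_iff₀ (by linarith : (0:ℝ) < 2 * μ)).mp hγ
      nlinarith
    have hfin : z.re * S ≤ (opNorm B / 2 - γ * μ) * S := by
      rw [hre]
      calc a ⬝ᵥ (At *ᵥ a) + b ⬝ᵥ (At *ᵥ b)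
          ≤ (opNorm B / 2 - γ * μ) * eucNorm a ^ 2 + (opNorm B / 2 - γ * μ) * eucNorm b ^ 2 :=
            add_le_add (hquad a) (hquad b)
        _ = (opNorm B / 2 - γ * μ) * S := by rw [← hab]; ring
    nlinarith [mul_neg_of_neg_of_pos hc hSpos, hSpos, hfin]
  · -- z is an eigenvalue of E 0
    apply hE1
    rw [mem_spectrum_iff_exists_eigvec]
    refine ⟨fun k => v (0, k), h0, ?_⟩
    funext j
    have h := heig (0, j)
    simp only [hA] at h
    simp only [if_pos rfl, sub_zero, Fintype.sum_prod_type, apply_ite Complex.ofReal,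
      Complex.ofReal_zero, ite_mul, zero_mul, Finset.sum_ite_eq, Finset.mem_univ,
      if_true] at h
    simpa [Matrix.mulVec, dotProduct, Matrix.map_apply] using h
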